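/- If a polynomial f : ℝ^n → ℝ is nonnegative on all of ℝ^n, then every vertex of its Newton polytope is a monomial square, i.e., has all even components and a positive coefficient. -/

import Mathlib

open MvPolynomial

/-- The Newton polytope of a multivariate polynomial: the convex hull (in `ℝⁿ`)
of its support. -/
noncomputable def newtonPolytope (n : ℕ) (f : MvPolynomial (Fin n) ℝ) : Set (Fin n → ℝ) :=
  convexHull ℝ ((fun α : Fin n →₀ ℕ => fun i => (α i : ℝ)) '' (f.support : Set (Fin n →₀ ℕ)))

open Filter Real in
/-- Key asymptotic lemma: if `α` is a support point of a nonnegative polynomial `f`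
whose weight `∑ αᵢ wᵢ` strictly dominates that of all other support points, then for
any sign vector `s`, the quantity `coeff α f * ∏ sᵢ ^ αᵢ` is nonnegative. -/
lemma newtonPolytope_aux {n : ℕ} (f : MvPolynomial (Fin n) ℝ)
    (hf : ∀ x : Fin n → ℝ, 0 ≤ eval x f)
    {α : Fin n →₀ ℕ} (hα : α ∈ f.support) (w : Fin n → ℝ)
    (hdom : ∀ β ∈ f.support, β ≠ α → (∑ i, (β i : ℝ) * w i) < ∑ i, (α i : ℝ) * w i)
    (s : Fin n → ℝ) (hs : ∀ i, s i = 1 ∨ s i = -1) :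
    0 ≤ f.coeff α * ∏ i, s i ^ α i := by
  set E : (Fin n →₀ ℕ) → ℝ := fun β => ∑ i, (β i : ℝ) * w i with hE
  set G : ℝ → ℝ :=
    fun t => ∑ β ∈ f.support, f.coeff β * (∏ i, s i ^ β i) * t ^ (E β - E α) with hG
  have hlim : Tendsto G atTop (nhds (f.coeff α * ∏ i, s i ^ α i)) := by
    have hsum : (f.coeff α * ∏ i, s i ^ α i)
        = ∑ β ∈ f.support, (if β = α then f.coeff α * ∏ i, s i ^ α i else 0) := by
      rw [Finset.sum_ite_eq' f.support α fun _ => f.coeff α * ∏ i, s i ^ α i, if_pos hα]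
    rw [hsum]
    apply tendsto_finset_sum
    intro β hβ
    by_cases h : β = α
    · subst h
      simp only [if_pos rfl, sub_self, Real.rpow_zero, mul_one]
      exact tendsto_const_nhds
    · simp only [if_neg h]
      have hneg : 0 < E α - E β := sub_pos.mpr (hdom β hβ h)
      have h0 := (tendsto_rpow_neg_atTop hneg).const_mul (f.coeff β * ∏ i, s i ^ β i)
      rw [mul_zero] at h0
      have : (fun t : ℝ => f.coeff β * (∏ i, s i ^ β i) * t ^ (-(E α - E β)))
          = fun t : ℝ => f.coeff β * (∏ i, s i ^ β i) * t ^ (E β - E α) := by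
        funext t; rw [neg_sub]
      rw [this] at h0
      exact h0
  have hGnn : ∀ᶠ t in atTop, 0 ≤ G t := by
    filter_upwards [eventually_gt_atTop (0 : ℝ)] with t ht
    have hx := hf fun i => s i * t ^ w i
    have heval : eval (fun i => s i * t ^ w i) f
        = ∑ β ∈ f.support, f.coeff β * (∏ i, s i ^ β i) * t ^ E β := by
      rw [eval_eq']
      refine Finset.sum_congr rfl fun β _ => ?_
      have hterm : ∀ i, (s i * t ^ w i) ^ β i
          = s i ^ β i * t ^ ((β i : ℝ) * w i) := by
        intro i
        rw [mul_pow, ← Real.rpow_natCast (t ^ w i) (β i), ← Real.rpow_mul ht.le,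
          mul_comm (w i)]
      calc f.coeff β * ∏ i, (s i * t ^ w i) ^ β i
          = f.coeff β * ∏ i, (s i ^ β i * t ^ ((β i : ℝ) * w i)) := by
            rw [Finset.prod_congr rfl fun i _ => hterm i]
        _ = f.coeff β * ((∏ i, s i ^ β i) * ∏ i, t ^ ((β i : ℝ) * w i)) := by
            rw [Finset.prod_mul_distrib]
        _ = f.coeff β * (∏ i, s i ^ β i) * t ^ E β := by
            rw [hE, Real.rpow_sum_of_pos ht]; ring
    have hGt : G t = eval (fun i => s i * t ^ w i) f * t ^ (-(E α)) := by
      rw [heval, Finset.sum_mul]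
      refine Finset.sum_congr rfl fun β _ => ?_
      rw [sub_eq_add_neg, Real.rpow_add ht, ← mul_assoc]
    rw [hGt]
    exact mul_nonneg hx (Real.rpow_pos_of_pos ht _).le
  exact ge_of_tendsto hlim hGnn

theorem vertices_of_nonneg_poly_are_monomial_squares (n : ℕ)
    (f : MvPolynomial (Fin n) ℝ) (hf : ∀ x : Fin n → ℝ, 0 ≤ eval x f) :
    ∀ v ∈ Set.extremePoints ℝ (newtonPolytope n f),
      ∃ α ∈ f.support, (∀ i, (α i : ℝ) = v i) ∧ (∀ i, Even (α i)) ∧ 0 < f.coeff α := by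
  intro v hv
  set A := (fun α : Fin n →₀ ℕ => fun i => (α i : ℝ)) '' (f.support : Set (Fin n →₀ ℕ))
    with hA
  obtain ⟨α, hαs, hαv⟩ := extremePoints_convexHull_subset hv
  have hαs' : α ∈ f.support := hαs
  -- injectivity of the cast map on exponent vectors
  have hinj : ∀ β : Fin n →₀ ℕ, (fun i => (β i : ℝ)) = v → β = α := by
    intro β hβ
    ext i
    have h1 := congr_fun hβ i
    have h2 := congr_fun hαv i
    dsimp only at h2
    exact_mod_cast h1.trans h2.symm
  -- separation of `v` from the other support points
  have hvnot : v ∉ convexHull ℝ (A \ {v}) := by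
    have h := ((convex_convexHull ℝ A).mem_extremePoints_iff_mem_diff_convexHull_diff).mp hv
    intro hmem
    exact h.2 (convexHull_mono (Set.diff_subset_diff_left (subset_convexHull ℝ A)) hmem)
  have hAfin : (A \ {v}).Finite := (f.support.finite_toSet.image _).diff
  obtain ⟨ℓ, c, hc1, hc2⟩ := geometric_hahn_banach_closed_point
    (convex_convexHull ℝ _) (hAfin.isClosed_convexHull (𝕜 := ℝ)) hvnot
  set w : Fin n → ℝ := fun i => ℓ (fun j => if i = j then (1 : ℝ) else 0) with hw
  have hlin : ∀ β : Fin n →₀ ℕ, ℓ (fun i => (β i : ℝ)) = ∑ i, (β i : ℝ) * w i := by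
    intro β
    conv_lhs => rw [pi_eq_sum_univ fun i => (β i : ℝ)]
    rw [map_sum]
    refine Finset.sum_congr rfl fun i _ => ?_
    rw [map_smul, smul_eq_mul]
  have hdom : ∀ β ∈ f.support, β ≠ α →
      (∑ i, (β i : ℝ) * w i) < ∑ i, (α i : ℝ) * w i := by
    intro β hβ hne
    have hβv : (fun i => (β i : ℝ)) ≠ v := fun h => hne (hinj β h)
    have hmem : (fun i => (β i : ℝ)) ∈ convexHull ℝ (A \ {v}) :=
      subset_convexHull ℝ _ ⟨⟨β, hβ, rfl⟩, hβv⟩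
    have h1 := hc1 _ hmem
    have h2 : ℓ v = ∑ i, (α i : ℝ) * w i := by rw [← hαv, hlin]
    rw [← hlin, ← h2]
    exact h1.trans hc2
  -- positivity of the coefficient
  have h1 := newtonPolytope_aux f hf hαs' w hdom (fun _ => 1) fun _ => Or.inl rfl
  simp only [one_pow, Finset.prod_const_one, mul_one] at h1
  have hne := MvPolynomial.mem_support_iff.mp hαs'
  have hpos : 0 < f.coeff α := lt_of_le_of_ne h1 (Ne.symm hne)
  refine ⟨α, hαs', fun i => congr_fun hαv i, ?_, hpos⟩
  -- evenness of exponents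
  intro j
  by_contra hodd
  rw [Nat.not_even_iff_odd] at hodd
  have h2 := newtonPolytope_aux f hf hαs' w hdom (fun i => if i = j then -1 else 1)
    (fun i => by by_cases h : i = j <;> simp [h])
  have hprod : (∏ i, (if i = j then (-1 : ℝ) else 1) ^ α i) = (-1 : ℝ) ^ α j := by
    rw [Finset.prod_eq_single j (fun i _ hij => by simp [hij])
      (fun h => absurd (Finset.mem_univ j) h)]
    simp
  rw [hprod, hodd.neg_one_pow, mul_neg_one] at h2
  linarith
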